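/- For k > 0 with k ≠ 1 and g₁, g₂ > 0, if z₁ solves z' = -z + g₁·ω·f(z) then z₂(t) := (g₁/g₂)^{1/(k-1)} z₁(t) solves z' = -z + g₂·ω·f(z); hence solutions at any two positive coupling strengths are related by a fixed positive scalar multiple. -/

import Mathlib

noncomputable def tpl (k : ℝ) (z : ℝ) : ℝ := if 0 < z then z ^ k else 0

noncomputable def tplV {N : ℕ} (k : ℝ) (z : Fin N → ℝ) : Fin N → ℝ := fun i => tpl k (z i)

lemma tpl_smul (k c x : ℝ) (hc : 0 < c) : tpl k (c * x) = c ^ k * tpl k x := by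
  unfold tpl
  by_cases hx : 0 < x
  · rw [if_pos (mul_pos hc hx), if_pos hx, Real.mul_rpow hc.le hx.le]
  · rw [if_neg hx, if_neg, mul_zero]
    push_neg at hx ⊢
    exact mul_nonpos_of_nonneg_of_nonpos hc.le hx

theorem stmt15 (N : ℕ) (ω : Matrix (Fin N) (Fin N) ℝ) (k g₁ g₂ : ℝ)
    (hk : 0 < k) (hk1 : k ≠ 1) (hg₁ : 0 < g₁) (hg₂ : 0 < g₂)
    (z₁ : ℝ → (Fin N → ℝ))
    (hz : ∀ t, HasDerivAt z₁ (-z₁ t + g₁ • ω.mulVec (tplV k (z₁ t))) t) :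
    ∀ t, HasDerivAt (fun t => (g₁/g₂) ^ ((1:ℝ)/(k-1)) • z₁ t)
      (-((g₁/g₂) ^ ((1:ℝ)/(k-1)) • z₁ t) +
        g₂ • ω.mulVec (tplV k ((g₁/g₂) ^ ((1:ℝ)/(k-1)) • z₁ t))) t := by
  intro t
  set c : ℝ := (g₁/g₂) ^ ((1:ℝ)/(k-1)) with hcdef
  have hc : 0 < c := Real.rpow_pos_of_pos (div_pos hg₁ hg₂) _
  have hck : g₂ * c ^ k = g₁ * c := by
    have hk1' : k - 1 ≠ 0 := sub_ne_zero.mpr hk1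
    have h1 : c ^ (k - 1) = g₁ / g₂ := by
      rw [hcdef, ← Real.rpow_mul (div_pos hg₁ hg₂).le]
      simp [one_div, inv_mul_cancel₀ hk1']
    have : c ^ k = (g₁ / g₂) * c := by
      have : c ^ k = c ^ (k - 1) * c ^ (1:ℝ) := by
        rw [← Real.rpow_add hc]; ring_nf
      rw [this, h1, Real.rpow_one]
    rw [this]; field_simp
  have htv : tplV k (c • z₁ t) = c ^ k • tplV k (z₁ t) := by
    funext i
    simp only [tplV, Pi.smul_apply, smul_eq_mul]
    exact tpl_smul k c (z₁ t i) hc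
  have h := (hz t).const_smul c
  convert h using 1
  case e'_4 => rfl
  case e'_5 => rfl
  case e'_6 => rfl
  case e'_8 => rfl
  rw [htv, Matrix.mulVec_smul, smul_add, smul_neg]
  rw [smul_smul, smul_smul, hck, mul_comm]
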